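/- Under the model rollout setup, equip S × A with a norm satisfying ‖(u,v)‖ ≤ ‖u‖ + ‖v‖, let r : S × A → ℝ be differentiable with ‖Dr‖ ≤ L_r everywhere, let γ ∈ [0,1], h ≥ 1, let f : S × A → S be a differentiable ‘true dynamics’ map with ‖D_s f‖, ‖D_a f‖ ≤ L_f everywhere, and let (s_i, a_i) be the rollout generated from the same constant initial state s₀ and the same policy π but with f in place of f̂. Then for every θ, ‖ D_θ[∑_{i=0}^{h−1} γ^i r(s_i(θ), a_i(θ))] − D_θ[∑_{i=0}^{h−1} γ^i r(ŝ_i(θ), â_i(θ))] ‖ ≤ ∑_{i=0}^{h−1} γ^i · L_r · ( 2·K̂(i) + Δ̃_i(θ) ), where Δ̃_i(θ) = ‖D_θs_i(θ) − D_θŝ_i(θ)‖ + ‖D_θa_i(θ) − D_θâ_i(θ)‖ and K̂(i) = (1 + L_π)·L_f̂·L_θ·∑_{j=0}^{i−1} (L_f̂(1+L_π))^j + L_θ. -/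

import Mathlib

open Finset

/-- Model rollout: states `ŝ_i : Θ → S` generated from the constant initial state `s₀`
by `ŝ₀(θ) = s₀`, `ŝ_{i+1}(θ) = f(ŝ_i(θ), π(θ, ŝ_i(θ)))`. -/
def sHat {Θ S A : Type*} (π : Θ × S → A) (f : S × A → S) (s₀ : S) : ℕ → Θ → S
  | 0 => fun _ => s₀
  | (i + 1) => fun θ => f (sHat π f s₀ i θ, π (θ, sHat π f s₀ i θ))

/-- Model rollout: actions `â_i(θ) = π(θ, ŝ_i(θ))`. -/
def aHat {Θ S A : Type*} (π : Θ × S → A) (f : S × A → S) (s₀ : S) (i : ℕ) : Θ → A :=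
  fun θ => π (θ, sHat π f s₀ i θ)

/-- `K̂(i) = (1 + L_π) · L_f̂ · L_θ · ∑_{j=0}^{i−1} (L_f̂ (1 + L_π))^j + L_θ`. -/
noncomputable def Khat (Lπ Lf Lθ : ℝ) (i : ℕ) : ℝ :=
  (1 + Lπ) * Lf * Lθ * ∑ j ∈ Finset.range i, (Lf * (1 + Lπ)) ^ j + Lθ

section Aux

variable {X Y E : Type*} [NormedAddCommGroup X] [NormedSpace ℝ X]
  [NormedAddCommGroup Y] [NormedSpace ℝ Y] [NormedAddCommGroup E] [NormedSpace ℝ E]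

lemma fderiv_pair_apply_le (F : X × Y → E) (hF : Differentiable ℝ F) {L1 L2 : ℝ}
    (h1 : ∀ p : X × Y, ‖fderiv ℝ (fun x => F (x, p.2)) p.1‖ ≤ L1)
    (h2 : ∀ p : X × Y, ‖fderiv ℝ (fun y => F (p.1, y)) p.2‖ ≤ L2)
    (p : X × Y) (u : X) (v : Y) :
    ‖fderiv ℝ F p (u, v)‖ ≤ L1 * ‖u‖ + L2 * ‖v‖ := by
  have e1 : fderiv ℝ (fun x => F (x, p.2)) p.1 =
      (fderiv ℝ F p).comp ((ContinuousLinearMap.id ℝ X).prod 0) := by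
    have h := ((hF (p.1, p.2)).hasFDerivAt.comp p.1
      ((hasFDerivAt_id (𝕜 := ℝ) p.1).prodMk (hasFDerivAt_const p.2 p.1)))
    exact h.fderiv
  have e2 : fderiv ℝ (fun y => F (p.1, y)) p.2 =
      (fderiv ℝ F p).comp ((0 : Y →L[ℝ] X).prod (ContinuousLinearMap.id ℝ Y)) := by
    have h := ((hF (p.1, p.2)).hasFDerivAt.comp p.2
      ((hasFDerivAt_const p.1 p.2).prodMk (hasFDerivAt_id p.2)))
    exact h.fderiv
  have b1 : ‖fderiv ℝ F p (u, 0)‖ ≤ L1 * ‖u‖ := by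
    have hu : fderiv ℝ F p (u, 0) = fderiv ℝ (fun x => F (x, p.2)) p.1 u := by
      rw [e1]; rfl
    rw [hu]
    exact le_trans (ContinuousLinearMap.le_opNorm _ u)
      (mul_le_mul_of_nonneg_right (h1 p) (norm_nonneg u))
  have b2 : ‖fderiv ℝ F p (0, v)‖ ≤ L2 * ‖v‖ := by
    have hv : fderiv ℝ F p (0, v) = fderiv ℝ (fun y => F (p.1, y)) p.2 v := by
      rw [e2]; rfl
    rw [hv]
    exact le_trans (ContinuousLinearMap.le_opNorm _ v)
      (mul_le_mul_of_nonneg_right (h2 p) (norm_nonneg v))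
  have huv : (u, v) = ((u, 0) : X × Y) + (0, v) := by simp
  calc ‖fderiv ℝ F p (u, v)‖ = ‖fderiv ℝ F p (u, 0) + fderiv ℝ F p (0, v)‖ := by
        rw [huv, map_add]
    _ ≤ ‖fderiv ℝ F p (u, 0)‖ + ‖fderiv ℝ F p (0, v)‖ := norm_add_le _ _
    _ ≤ L1 * ‖u‖ + L2 * ‖v‖ := add_le_add b1 b2

end Aux

section Rollout

variable {Θ S A : Type*} [NormedAddCommGroup Θ] [NormedSpace ℝ Θ]
  [NormedAddCommGroup S] [NormedSpace ℝ S] [NormedAddCommGroup A] [NormedSpace ℝ A]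

lemma sHat_diff (π : Θ × S → A) (g : S × A → S) (s₀ : S)
    (hπ : Differentiable ℝ π) (hg : Differentiable ℝ g) (i : ℕ) :
    Differentiable ℝ (sHat π g s₀ i) := by
  induction i with
  | zero => exact differentiable_const _
  | succ i ih => exact hg.comp (ih.prodMk (hπ.comp (differentiable_id.prodMk ih)))

lemma aHat_diff (π : Θ × S → A) (g : S × A → S) (s₀ : S)
    (hπ : Differentiable ℝ π) (hg : Differentiable ℝ g) (i : ℕ) :
    Differentiable ℝ (aHat π g s₀ i) :=
  hπ.comp (differentiable_id.prodMk (sHat_diff π g s₀ hπ hg i))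

variable {π : Θ × S → A} {g : S × A → S} {Lθ Lπ Lg : ℝ}
  (hπdiff : Differentiable ℝ π)
  (hπθ : ∀ p : Θ × S, ‖fderiv ℝ (fun θ : Θ => π (θ, p.2)) p.1‖ ≤ Lθ)
  (hπs : ∀ p : Θ × S, ‖fderiv ℝ (fun s : S => π (p.1, s)) p.2‖ ≤ Lπ)
  (hgdiff : Differentiable ℝ g)
  (hgs : ∀ p : S × A, ‖fderiv ℝ (fun s : S => g (s, p.2)) p.1‖ ≤ Lg)
  (hga : ∀ p : S × A, ‖fderiv ℝ (fun a : A => g (p.1, a)) p.2‖ ≤ Lg)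

-- bound for θ ↦ π (θ, σ θ)
include hπdiff hπθ hπs in
lemma comp_pi_bound {σ : Θ → S} (hσ : Differentiable ℝ σ) {B : ℝ}
    (hB : ∀ θ, ‖fderiv ℝ σ θ‖ ≤ B) (hLθ : 0 ≤ Lθ) (hLπ : 0 ≤ Lπ) (hB0 : 0 ≤ B)
    (θ : Θ) : ‖fderiv ℝ (fun θ' => π (θ', σ θ')) θ‖ ≤ Lθ + Lπ * B := by
  have hd : HasFDerivAt (fun θ' => π (θ', σ θ'))
      ((fderiv ℝ π (θ, σ θ)).comp
        ((ContinuousLinearMap.id ℝ Θ).prod (fderiv ℝ σ θ))) θ :=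
    (hπdiff (θ, σ θ)).hasFDerivAt.comp θ
      ((hasFDerivAt_id θ).prodMk (hσ θ).hasFDerivAt)
  rw [hd.fderiv]
  refine ContinuousLinearMap.opNorm_le_bound _
    (by positivity) (fun u => ?_)
  have : ((fderiv ℝ π (θ, σ θ)).comp
      ((ContinuousLinearMap.id ℝ Θ).prod (fderiv ℝ σ θ))) u
      = fderiv ℝ π (θ, σ θ) (u, fderiv ℝ σ θ u) := rfl
  rw [this]
  have h1 := fderiv_pair_apply_le π hπdiff hπθ hπs (θ, σ θ) u (fderiv ℝ σ θ u)
  have h2 : ‖fderiv ℝ σ θ u‖ ≤ B * ‖u‖ :=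
    le_trans (ContinuousLinearMap.le_opNorm _ u)
      (mul_le_mul_of_nonneg_right (hB θ) (norm_nonneg u))
  nlinarith [norm_nonneg u, norm_nonneg (fderiv ℝ σ θ u)]

include hπdiff hπθ hπs hgdiff hgs hga in
lemma sHat_bound (s₀ : S) (hLθ : 0 ≤ Lθ) (hLπ : 0 ≤ Lπ) (hLg : 0 ≤ Lg)
    (i : ℕ) (θ : Θ) :
    ‖fderiv ℝ (sHat π g s₀ i) θ‖ ≤
      Lg * Lθ * ∑ j ∈ Finset.range i, (Lg * (1 + Lπ)) ^ j := by
  induction i generalizing θ with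
  | zero =>
    simp [sHat, fderiv_const]
  | succ i ih =>
    have hσ : Differentiable ℝ (sHat π g s₀ i) := sHat_diff π g s₀ hπdiff hgdiff i
    set Sb : ℝ := Lg * Lθ * ∑ j ∈ Finset.range i, (Lg * (1 + Lπ)) ^ j with hSb
    have hSb0 : 0 ≤ Sb := le_trans (norm_nonneg _) (ih θ)
    have hα : Differentiable ℝ (fun θ' => π (θ', sHat π g s₀ i θ')) :=
      hπdiff.comp (differentiable_id.prodMk hσ)
    have hαb : ∀ θ', ‖fderiv ℝ (fun θ' => π (θ', sHat π g s₀ i θ')) θ'‖ ≤ Lθ + Lπ * Sb :=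
      fun θ' => comp_pi_bound hπdiff hπθ hπs hσ ih hLθ hLπ hSb0 θ'
    have hd : HasFDerivAt (sHat π g s₀ (i + 1))
        ((fderiv ℝ g (sHat π g s₀ i θ, π (θ, sHat π g s₀ i θ))).comp
          ((fderiv ℝ (sHat π g s₀ i) θ).prod
            (fderiv ℝ (fun θ' => π (θ', sHat π g s₀ i θ')) θ))) θ :=
      (hgdiff _).hasFDerivAt.comp θ ((hσ θ).hasFDerivAt.prodMk (hα θ).hasFDerivAt)
    rw [hd.fderiv]
    have key : Lg * Sb + Lg * (Lθ + Lπ * Sb) =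
        Lg * Lθ * ∑ j ∈ Finset.range (i + 1), (Lg * (1 + Lπ)) ^ j := by
      rw [geom_sum_succ, hSb]; ring
    refine ContinuousLinearMap.opNorm_le_bound _ (by rw [← key]; positivity) (fun u => ?_)
    have happ : ((fderiv ℝ g (sHat π g s₀ i θ, π (θ, sHat π g s₀ i θ))).comp
        ((fderiv ℝ (sHat π g s₀ i) θ).prod
          (fderiv ℝ (fun θ' => π (θ', sHat π g s₀ i θ')) θ))) u
        = fderiv ℝ g (sHat π g s₀ i θ, π (θ, sHat π g s₀ i θ))
            (fderiv ℝ (sHat π g s₀ i) θ u,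
             fderiv ℝ (fun θ' => π (θ', sHat π g s₀ i θ')) θ u) := rfl
    rw [happ]
    have h1 := fderiv_pair_apply_le g hgdiff hgs hga
      (sHat π g s₀ i θ, π (θ, sHat π g s₀ i θ))
      (fderiv ℝ (sHat π g s₀ i) θ u)
      (fderiv ℝ (fun θ' => π (θ', sHat π g s₀ i θ')) θ u)
    have h2 : ‖fderiv ℝ (sHat π g s₀ i) θ u‖ ≤ Sb * ‖u‖ :=
      le_trans (ContinuousLinearMap.le_opNorm _ u)
        (mul_le_mul_of_nonneg_right (ih θ) (norm_nonneg u))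
    have h3 : ‖fderiv ℝ (fun θ' => π (θ', sHat π g s₀ i θ')) θ u‖ ≤ (Lθ + Lπ * Sb) * ‖u‖ :=
      le_trans (ContinuousLinearMap.le_opNorm _ u)
        (mul_le_mul_of_nonneg_right (hαb θ) (norm_nonneg u))
    rw [← key]
    nlinarith [norm_nonneg u, norm_nonneg (fderiv ℝ (sHat π g s₀ i) θ u),
      norm_nonneg (fderiv ℝ (fun θ' => π (θ', sHat π g s₀ i θ')) θ u)]

include hπdiff hπθ hπs hgdiff hgs hga in
lemma aHat_bound (s₀ : S) (hLθ : 0 ≤ Lθ) (hLπ : 0 ≤ Lπ) (hLg : 0 ≤ Lg)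
    (i : ℕ) (θ : Θ) :
    ‖fderiv ℝ (aHat π g s₀ i) θ‖ ≤
      Lθ + Lπ * (Lg * Lθ * ∑ j ∈ Finset.range i, (Lg * (1 + Lπ)) ^ j) := by
  have hσ := sHat_diff π g s₀ hπdiff hgdiff i
  have hb := sHat_bound hπdiff hπθ hπs hgdiff hgs hga s₀ hLθ hLπ hLg i
  have h0 : (0:ℝ) ≤ Lg * Lθ * ∑ j ∈ Finset.range i, (Lg * (1 + Lπ)) ^ j := by positivity
  exact comp_pi_bound hπdiff hπθ hπs hσ hb hLθ hLπ h0 θ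

end Rollout

/-- **Pathwise gradient comparison of the h-step discounted reward sum along the true
and the model-generated trajectory** (reward part of the gradient-bias bound,
Proposition 3). -/
theorem stmt11 {Θ S A : Type*}
    [NormedAddCommGroup Θ] [NormedSpace ℝ Θ]
    [NormedAddCommGroup S] [NormedSpace ℝ S]
    [NormedAddCommGroup A] [NormedSpace ℝ A]
    (π : Θ × S → A) (fh f : S × A → S) (s₀ : S)
    (Lθ Lπ Lfh Lf Lr : ℝ)
    (hπdiff : Differentiable ℝ π)
    (hπθ : ∀ p : Θ × S, ‖fderiv ℝ (fun θ : Θ => π (θ, p.2)) p.1‖ ≤ Lθ)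
    (hπs : ∀ p : Θ × S, ‖fderiv ℝ (fun s : S => π (p.1, s)) p.2‖ ≤ Lπ)
    (hfhdiff : Differentiable ℝ fh)
    (hfhs : ∀ p : S × A, ‖fderiv ℝ (fun s : S => fh (s, p.2)) p.1‖ ≤ Lfh)
    (hfha : ∀ p : S × A, ‖fderiv ℝ (fun a : A => fh (p.1, a)) p.2‖ ≤ Lfh)
    (hfdiff : Differentiable ℝ f)
    (hfs : ∀ p : S × A, ‖fderiv ℝ (fun s : S => f (s, p.2)) p.1‖ ≤ Lf)
    (hfa : ∀ p : S × A, ‖fderiv ℝ (fun a : A => f (p.1, a)) p.2‖ ≤ Lf)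
    (r : S × A → ℝ)
    (hrdiff : Differentiable ℝ r) (hrL : ∀ x : S × A, ‖fderiv ℝ r x‖ ≤ Lr)
    (γ : ℝ) (hγ : γ ∈ Set.Icc (0 : ℝ) 1) (h : ℕ) (hh : 1 ≤ h) :
    ∀ θ : Θ,
      ‖fderiv ℝ (fun θ' : Θ =>
            ∑ i ∈ Finset.range h, γ ^ i * r (sHat π f s₀ i θ', aHat π f s₀ i θ')) θ -
          fderiv ℝ (fun θ' : Θ =>
            ∑ i ∈ Finset.range h, γ ^ i * r (sHat π fh s₀ i θ', aHat π fh s₀ i θ')) θ‖ ≤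
        ∑ i ∈ Finset.range h, γ ^ i * Lr *
          (2 * Khat Lπ Lfh Lθ i +
            (‖fderiv ℝ (sHat π f s₀ i) θ - fderiv ℝ (sHat π fh s₀ i) θ‖ +
              ‖fderiv ℝ (aHat π f s₀ i) θ - fderiv ℝ (aHat π fh s₀ i) θ‖)) := by
  intro θ
  obtain ⟨hγ0, hγ1⟩ := hγ
  have hLθ0 : 0 ≤ Lθ := le_trans (norm_nonneg _) (hπθ (θ, s₀))
  have hLπ0 : 0 ≤ Lπ := le_trans (norm_nonneg _) (hπs (θ, s₀))
  have hLfh0 : 0 ≤ Lfh := le_trans (norm_nonneg _) (hfhs (s₀, π (θ, s₀)))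
  have hLr0 : 0 ≤ Lr := le_trans (norm_nonneg _) (hrL (s₀, π (θ, s₀)))
  -- differentiability
  have hdiffG : ∀ (g : S × A → S), Differentiable ℝ g → ∀ i : ℕ,
      Differentiable ℝ (fun θ' => (sHat π g s₀ i θ', aHat π g s₀ i θ')) :=
    fun g hg i => (sHat_diff π g s₀ hπdiff hg i).prodMk (aHat_diff π g s₀ hπdiff hg i)
  have hdiffT : ∀ (g : S × A → S), Differentiable ℝ g → ∀ i : ℕ,
      Differentiable ℝ (fun θ' => r (sHat π g s₀ i θ', aHat π g s₀ i θ')) :=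
    fun g hg i => hrdiff.comp (hdiffG g hg i)
  -- fderiv of the sums
  have hsum : ∀ (g : S × A → S) (hg : Differentiable ℝ g),
      fderiv ℝ (fun θ' => ∑ i ∈ Finset.range h,
          γ ^ i * r (sHat π g s₀ i θ', aHat π g s₀ i θ')) θ
      = ∑ i ∈ Finset.range h,
          γ ^ i • fderiv ℝ (fun θ' => r (sHat π g s₀ i θ', aHat π g s₀ i θ')) θ := by
    intro g hg
    rw [fderiv_fun_sum (fun i _ => ((hdiffT g hg i θ).const_mul (γ ^ i)))]
    exact Finset.sum_congr rfl fun i _ => fderiv_const_mul (hdiffT g hg i θ) (γ ^ i)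
  rw [hsum f hfdiff, hsum fh hfhdiff, ← Finset.sum_sub_distrib]
  refine le_trans (norm_sum_le _ _) (Finset.sum_le_sum fun i _ => ?_)
  -- per-term analysis
  have hT : ∀ (g : S × A → S) (hg : Differentiable ℝ g),
      fderiv ℝ (fun θ' => r (sHat π g s₀ i θ', aHat π g s₀ i θ')) θ
      = (fderiv ℝ r (sHat π g s₀ i θ, aHat π g s₀ i θ)).comp
          ((fderiv ℝ (sHat π g s₀ i) θ).prod (fderiv ℝ (aHat π g s₀ i) θ)) := by
    intro g hg
    have h1 : fderiv ℝ (fun θ' => (sHat π g s₀ i θ', aHat π g s₀ i θ')) θ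
        = (fderiv ℝ (sHat π g s₀ i) θ).prod (fderiv ℝ (aHat π g s₀ i) θ) :=
      DifferentiableAt.fderiv_prodMk (sHat_diff π g s₀ hπdiff hg i θ)
        (aHat_diff π g s₀ hπdiff hg i θ)
    rw [← h1]
    exact fderiv_comp θ (hrdiff _) (hdiffG g hg i θ)
  rw [hT f hfdiff, hT fh hfhdiff]
  -- norm bounds
  set Ds := fderiv ℝ (sHat π f s₀ i) θ with hDs
  set Da := fderiv ℝ (aHat π f s₀ i) θ with hDa
  set Dsh := fderiv ℝ (sHat π fh s₀ i) θ with hDsh'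
  set Dah := fderiv ℝ (aHat π fh s₀ i) θ with hDah'
  set R := fderiv ℝ r (sHat π f s₀ i θ, aHat π f s₀ i θ) with hR
  set Rh := fderiv ℝ r (sHat π fh s₀ i θ, aHat π fh s₀ i θ) with hRh
  have hrLx : ‖R‖ ≤ Lr := hrL _
  have hrLxh : ‖Rh‖ ≤ Lr := hrL _
  have hsplit : R.comp (Ds.prod Da) - Rh.comp (Dsh.prod Dah)
      = R.comp (Ds.prod Da - Dsh.prod Dah) + (R - Rh).comp (Dsh.prod Dah) := by
    rw [ContinuousLinearMap.comp_sub, ContinuousLinearMap.sub_comp]; abel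
  have hGdiff : Ds.prod Da - Dsh.prod Dah = (Ds - Dsh).prod (Da - Dah) := by
    ext u <;> simp
  have hGdiffnorm : ‖Ds.prod Da - Dsh.prod Dah‖ ≤ ‖Ds - Dsh‖ + ‖Da - Dah‖ := by
    rw [hGdiff, ContinuousLinearMap.opNorm_prod, Prod.norm_def]
    exact max_le (le_add_of_nonneg_right (norm_nonneg _))
      (le_add_of_nonneg_left (norm_nonneg _))
  obtain ⟨Sg, hSg0, hKeq, hDsh, hDah⟩ :
      ∃ Sg : ℝ, 0 ≤ Sg ∧ Khat Lπ Lfh Lθ i = (1 + Lπ) * Lfh * Lθ * Sg + Lθ ∧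
        ‖Dsh‖ ≤ Lfh * Lθ * Sg ∧ ‖Dah‖ ≤ Lθ + Lπ * (Lfh * Lθ * Sg) :=
    ⟨∑ j ∈ Finset.range i, (Lfh * (1 + Lπ)) ^ j,
      Finset.sum_nonneg fun j _ => pow_nonneg (by positivity) j, rfl,
      sHat_bound hπdiff hπθ hπs hfhdiff hfhs hfha s₀ hLθ0 hLπ0 hLfh0 i θ,
      aHat_bound hπdiff hπθ hπs hfhdiff hfhs hfha s₀ hLθ0 hLπ0 hLfh0 i θ⟩
  have hK0 : 0 ≤ Khat Lπ Lfh Lθ i := by rw [hKeq]; positivity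
  clear_value Ds Da Dsh Dah R Rh
  have hGhnorm : ‖Dsh.prod Dah‖ ≤ Khat Lπ Lfh Lθ i := by
    rw [ContinuousLinearMap.opNorm_prod, Prod.norm_def, hKeq]
    have hP : (0:ℝ) ≤ Lfh * Lθ * Sg := by positivity
    have hP2 : (0:ℝ) ≤ Lπ * (Lfh * Lθ * Sg) := by positivity
    have h1 : Lfh * Lθ * Sg ≤ (1 + Lπ) * Lfh * Lθ * Sg + Lθ := by
      clear * - hP hP2 hLθ0; nlinarith
    have h2 : Lθ + Lπ * (Lfh * Lθ * Sg) ≤ (1 + Lπ) * Lfh * Lθ * Sg + Lθ := by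
      clear * - hP hP2 hLθ0; nlinarith
    exact max_le (le_trans hDsh h1) (le_trans hDah h2)
  have hRRh : ‖R - Rh‖ ≤ 2 * Lr := by
    calc ‖R - Rh‖ ≤ ‖R‖ + ‖Rh‖ := norm_sub_le _ _
      _ ≤ 2 * Lr := by linarith
  have hbound : ‖R.comp (Ds.prod Da) - Rh.comp (Dsh.prod Dah)‖
      ≤ Lr * (2 * Khat Lπ Lfh Lθ i + (‖Ds - Dsh‖ + ‖Da - Dah‖)) := by
    rw [hsplit]
    calc ‖R.comp (Ds.prod Da - Dsh.prod Dah) + (R - Rh).comp (Dsh.prod Dah)‖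
        ≤ ‖R.comp (Ds.prod Da - Dsh.prod Dah)‖ + ‖(R - Rh).comp (Dsh.prod Dah)‖ :=
          norm_add_le _ _
      _ ≤ ‖R‖ * ‖Ds.prod Da - Dsh.prod Dah‖ + ‖R - Rh‖ * ‖Dsh.prod Dah‖ :=
          add_le_add (ContinuousLinearMap.opNorm_comp_le _ _)
            (ContinuousLinearMap.opNorm_comp_le _ _)
      _ ≤ Lr * (‖Ds - Dsh‖ + ‖Da - Dah‖) + (2 * Lr) * Khat Lπ Lfh Lθ i := by
          refine add_le_add (mul_le_mul hrLx hGdiffnorm (norm_nonneg _) hLr0)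
            (mul_le_mul hRRh hGhnorm (norm_nonneg _) (by linarith))
      _ = Lr * (2 * Khat Lπ Lfh Lθ i + (‖Ds - Dsh‖ + ‖Da - Dah‖)) := by ring
  calc ‖γ ^ i • (R.comp (Ds.prod Da)) - γ ^ i • (Rh.comp (Dsh.prod Dah))‖
      = γ ^ i * ‖R.comp (Ds.prod Da) - Rh.comp (Dsh.prod Dah)‖ := by
        rw [← smul_sub, norm_smul, Real.norm_of_nonneg (pow_nonneg hγ0 i)]
    _ ≤ γ ^ i * (Lr * (2 * Khat Lπ Lfh Lθ i + (‖Ds - Dsh‖ + ‖Da - Dah‖))) :=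
        mul_le_mul_of_nonneg_left hbound (pow_nonneg hγ0 i)
    _ = γ ^ i * Lr * (2 * Khat Lπ Lfh Lθ i + (‖Ds - Dsh‖ + ‖Da - Dah‖)) := by ring
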